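/- Let χ : H → kˣ be a character with χ ≠ χ^s. Then the space of U-invariants (Ind_B^Γ χ^s)^U is two-dimensional over k, and every nonzero k[Γ]-submodule of Ind_B^Γ χ^s contains Im(T_{n_s} : Ind_B^Γ χ → Ind_B^Γ χ^s); in particular Ind_B^Γ χ^s is an indecomposable k[Γ]-module and Im(T_{n_s}) is its unique minimal nonzero submodule. -/

import Mathlib

open Matrix

noncomputable section

abbrev GL2 (F : Type) [Field F] := Matrix.GeneralLinearGroup (Fin 2) F

variable (F : Type) [Field F] [Fintype F] (k : Type) [Field k]

/-- The unipotent upper-triangular matrix `[[1, c], [0, 1]]`. -/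
def uElt (c : F) : GL2 F :=
  Matrix.GeneralLinearGroup.mkOfDetNeZero !![1, c; 0, 1] (by simp [Matrix.det_fin_two_of])

/-- The upper-triangular matrix `[[a, c], [0, d]]`. -/
def bElt (a d : Fˣ) (c : F) : GL2 F :=
  Matrix.GeneralLinearGroup.mkOfDetNeZero !![(a : F), c; 0, (d : F)]
    (by simp [Matrix.det_fin_two_of])

/-- The diagonal matrix `[[a, 0], [0, d]]`. -/
def hElt (a d : Fˣ) : GL2 F := bElt F a d 0

/-- The matrix `n_s = [[0, -1], [1, 0]]`. -/
def nsElt : GL2 F :=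
  Matrix.GeneralLinearGroup.mkOfDetNeZero !![0, -1; 1, 0] (by norm_num [Matrix.det_fin_two_of])

/-- The right-translation representation of `GL₂(F)` on the space of `k`-valued functions. -/
def rt : Representation k (GL2 F) (GL2 F → k) where
  toFun g :=
    { toFun := fun f x => f (x * g)
      map_add' := fun _ _ => rfl
      map_smul' := fun _ _ => rfl }
  map_one' := by ext f x; simp
  map_mul' g g' := by ext f x; simp [mul_assoc]

/-- `χ^s`, the character obtained from `χ` by swapping the two diagonal entries. -/
def swapChar (χ : (Fˣ × Fˣ) →* kˣ) : (Fˣ × Fˣ) →* kˣ where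
  toFun x := χ (x.2, x.1)
  map_one' := by simp; exact χ.map_one
  map_mul' x y := by rw [← _root_.map_mul]; rfl

/-- The induced representation `Ind_B^Γ χ` as a subspace of the space of functions `Γ → k`:
functions satisfying `f (b * g) = χ (b) * f g` for all upper-triangular `b`. -/
def Ind (χ : (Fˣ × Fˣ) →* kˣ) : Submodule k (GL2 F → k) where
  carrier := {f | ∀ (a d : Fˣ) (c : F) (g : GL2 F), f (bElt F a d c * g) = (χ (a, d) : k) * f g}
  add_mem' := by
    intro f1 f2 h1 h2 a d c g
    simp only [Pi.add_apply, h1 a d c g, h2 a d c g]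
    ring
  zero_mem' := by intro a d c g; simp
  smul_mem' := by
    intro t f hf a d c g
    simp only [Pi.smul_apply, smul_eq_mul, hf a d c g]
    ring

/-- The Hecke operator `T_{n_s}`, `(T f) x = ∑_{c ∈ F} f (n_s⁻¹ * u_c * x)`. -/
def heckeT : (GL2 F → k) →ₗ[k] (GL2 F → k) where
  toFun f x := ∑ c : F, f ((nsElt F)⁻¹ * uElt F c * x)
  map_add' f g := by funext x; simp [Finset.sum_add_distrib]
  map_smul' t f := by funext x; simp [Finset.mul_sum]

/-- The submodule of invariants of a representation under a set of group elements. -/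
def invSubmodule {G V : Type*} [Group G] [AddCommGroup V] [Module k V]
    (ρ : Representation k G V) (S : Set G) : Submodule k V where
  carrier := {v | ∀ g ∈ S, ρ g v = v}
  add_mem' := by intro v w hv hw g hg; rw [map_add, hv g hg, hw g hg]
  zero_mem' := by intro g hg; rw [map_zero]
  smul_mem' := by intro c v hv g hg; rw [LinearMap.map_smul, hv g hg]


set_option linter.unusedSectionVars false
set_option maxHeartbeats 1000000
open scoped Classical

section Aux

local notation "M2" => Matrix (Fin 2) (Fin 2) F

lemma entry_mul (x y : M2) (i j : Fin 2) :
    (x * y) i j = x i 0 * y 0 j + x i 1 * y 1 j := by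
  rw [Matrix.mul_apply, Fin.sum_univ_two]

@[simp] lemma bElt_val (a d : Fˣ) (c : F) :
    ((bElt F a d c : GL2 F) : M2) = !![(a : F), c; 0, (d : F)] := rfl

@[simp] lemma uElt_val (c : F) : ((uElt F c : GL2 F) : M2) = !![1, c; 0, 1] := rfl

@[simp] lemma nsElt_val : ((nsElt F : GL2 F) : M2) = !![0, -1; 1, 0] := rfl

lemma gl2_ext {x y : GL2 F} (h : (x : M2) = y) : x = y := Units.ext h

lemma det_ne_zero (g : GL2 F) : (g : M2).det ≠ 0 := by
  have h : (g : M2).det * ((g⁻¹ : GL2 F) : M2).det = 1 := by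
    rw [← Matrix.det_mul, ← Matrix.GeneralLinearGroup.coe_mul, mul_inv_cancel,
      Matrix.GeneralLinearGroup.coe_one, Matrix.det_one]
  intro h0
  rw [h0, zero_mul] at h
  exact zero_ne_one h

lemma uElt_mul (a b : F) : uElt F a * uElt F b = uElt F (a + b) := by
  apply gl2_ext
  rw [Matrix.GeneralLinearGroup.coe_mul, uElt_val, uElt_val, uElt_val,
    Matrix.mul_fin_two]
  norm_num [add_comm]

@[simp] lemma uElt_zero : uElt F 0 = 1 := by
  apply gl2_ext
  rw [uElt_val, Matrix.GeneralLinearGroup.coe_one, Matrix.one_fin_two]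

/-- The lower-triangular unipotent matrix `[[1,0],[c,1]]`. -/
def lElt (c : F) : GL2 F :=
  Matrix.GeneralLinearGroup.mkOfDetNeZero !![1, 0; c, 1] (by simp [Matrix.det_fin_two_of])

@[simp] lemma lElt_val (c : F) : ((lElt F c : GL2 F) : M2) = !![1, 0; c, 1] := rfl

lemma lElt_mul (a b : F) : lElt F a * lElt F b = lElt F (a + b) := by
  apply gl2_ext
  rw [Matrix.GeneralLinearGroup.coe_mul, lElt_val, lElt_val, lElt_val,
    Matrix.mul_fin_two]
  norm_num [add_comm]

@[simp] lemma lElt_zero : lElt F 0 = 1 := by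
  apply gl2_ext
  rw [lElt_val, Matrix.GeneralLinearGroup.coe_one, Matrix.one_fin_two]

lemma lElt_inv (c : F) : (lElt F c)⁻¹ = lElt F (-c) := by
  apply inv_eq_of_mul_eq_one_right
  rw [lElt_mul, add_neg_cancel, lElt_zero]

lemma uElt_inv (c : F) : (uElt F c)⁻¹ = uElt F (-c) := by
  apply inv_eq_of_mul_eq_one_right
  rw [uElt_mul, add_neg_cancel, uElt_zero]

lemma ns_mul_u (c : F) : nsElt F * uElt F c = lElt F (-c) * nsElt F := by
  apply gl2_ext
  rw [Matrix.GeneralLinearGroup.coe_mul, Matrix.GeneralLinearGroup.coe_mul,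
    nsElt_val, uElt_val, lElt_val, Matrix.mul_fin_two, Matrix.mul_fin_two]
  norm_num

lemma uElt_pow (c : F) (m : ℕ) : uElt F c ^ m = uElt F (m • c) := by
  induction m with
  | zero => simp
  | succ m ih => rw [pow_succ, ih, uElt_mul, succ_nsmul]

end Aux
section Aux2

local notation "M2" => Matrix (Fin 2) (Fin 2) F

/-- Extension of a character of `Fˣ × Fˣ` to `F × F` by zero, valued in `k`. -/
def Xc (χ : (Fˣ × Fˣ) →* kˣ) (a d : F) : k :=
  if h : a ≠ 0 ∧ d ≠ 0 then (χ (Units.mk0 a h.1, Units.mk0 d h.2) : k) else 0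

lemma Xc_units (χ : (Fˣ × Fˣ) →* kˣ) (a d : Fˣ) :
    Xc F k χ (a : F) (d : F) = (χ (a, d) : k) := by
  rw [Xc, dif_pos ⟨a.ne_zero, d.ne_zero⟩]
  exact congrArg Units.val (congrArg χ (Prod.ext (Units.ext rfl) (Units.ext rfl)))

@[simp] lemma Xc_one (χ : (Fˣ × Fˣ) →* kˣ) : Xc F k χ 1 1 = 1 := by
  have := Xc_units F k χ 1 1
  rw [show ((1 : Fˣ), (1 : Fˣ)) = 1 from rfl, _root_.map_one, Units.val_one] at this
  simpa using this

lemma Xc_mul (χ : (Fˣ × Fˣ) →* kˣ) {a a' d d' : F}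
    (ha : a ≠ 0) (ha' : a' ≠ 0) (hd : d ≠ 0) (hd' : d' ≠ 0) :
    Xc F k χ (a * a') (d * d') = Xc F k χ a d * Xc F k χ a' d' := by
  rw [Xc, Xc, Xc, dif_pos ⟨mul_ne_zero ha ha', mul_ne_zero hd hd'⟩,
    dif_pos ⟨ha, hd⟩, dif_pos ⟨ha', hd'⟩]
  rw [← Units.val_mul, ← _root_.map_mul]
  exact congrArg Units.val (congrArg χ (Prod.ext (Units.ext rfl) (Units.ext rfl)))

lemma Xc_ne_zero (χ : (Fˣ × Fˣ) →* kˣ) {a d : F} (ha : a ≠ 0) (hd : d ≠ 0) :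
    Xc F k χ a d ≠ 0 := by
  rw [Xc, dif_pos ⟨ha, hd⟩]
  exact Units.ne_zero _

lemma Xc_swap (χ : (Fˣ × Fˣ) →* kˣ) (a d : F) :
    Xc F k (swapChar F k χ) a d = Xc F k χ d a := by
  by_cases ha : a ≠ 0 <;> by_cases hd : d ≠ 0
  · rw [Xc, Xc, dif_pos ⟨ha, hd⟩, dif_pos ⟨hd, ha⟩]; rfl
  · rw [Xc, Xc, dif_neg (by tauto), dif_neg (by tauto)]
  · rw [Xc, Xc, dif_neg (by tauto), dif_neg (by tauto)]
  · rw [Xc, Xc, dif_neg (by tauto), dif_neg (by tauto)]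

/-- The function supported on `B`, with `fB χ b = χ(b)`; an element of `Ind χ`. -/
def fB (χ : (Fˣ × Fˣ) →* kˣ) : GL2 F → k := fun g =>
  if (g : M2) 1 0 = 0 then Xc F k χ ((g : M2) 0 0) ((g : M2) 1 1) else 0

/-- The function supported on the big cell `B nₛ U`, with `fB χ (b nₛ u) = χ(b)`;
an element of `Ind χ`. -/
def fC (χ : (Fˣ × Fˣ) →* kˣ) : GL2 F → k := fun g =>
  if (g : M2) 1 0 = 0 then 0
  else Xc F k χ ((g : M2).det / (g : M2) 1 0) ((g : M2) 1 0)

/- entries of `b * g` -/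
lemma b_mul_entries (a d : Fˣ) (c : F) (g : GL2 F) :
    ((bElt F a d c * g : GL2 F) : M2) 0 0 = a * (g : M2) 0 0 + c * (g : M2) 1 0 ∧
    ((bElt F a d c * g : GL2 F) : M2) 0 1 = a * (g : M2) 0 1 + c * (g : M2) 1 1 ∧
    ((bElt F a d c * g : GL2 F) : M2) 1 0 = d * (g : M2) 1 0 ∧
    ((bElt F a d c * g : GL2 F) : M2) 1 1 = d * (g : M2) 1 1 := by
  rw [Matrix.GeneralLinearGroup.coe_mul]
  refine ⟨?_, ?_, ?_, ?_⟩ <;> rw [entry_mul] <;> simp [bElt_val]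

lemma det_b_mul (a d : Fˣ) (c : F) (g : GL2 F) :
    ((bElt F a d c * g : GL2 F) : M2).det = (a : F) * d * (g : M2).det := by
  rw [Matrix.GeneralLinearGroup.coe_mul, Matrix.det_mul, bElt_val,
    Matrix.det_fin_two_of]
  ring

lemma fB_mem (χ : (Fˣ × Fˣ) →* kˣ) : fB F k χ ∈ Ind F k χ := by
  intro a d c g
  obtain ⟨h00, h01, h10, h11⟩ := b_mul_entries F a d c g
  by_cases hg : (g : M2) 1 0 = 0
  · have hd : (g : M2).det = (g : M2) 0 0 * (g : M2) 1 1 := by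
      rw [Matrix.det_fin_two, hg]; ring
    have hg00 : (g : M2) 0 0 ≠ 0 := fun h =>
      det_ne_zero F g (by rw [hd, h, zero_mul])
    have hg11 : (g : M2) 1 1 ≠ 0 := fun h =>
      det_ne_zero F g (by rw [hd, h, mul_zero])
    rw [fB, fB, if_pos hg, if_pos (by rw [h10, hg, mul_zero]), h00, h11, hg,
      mul_zero, add_zero, Xc_mul F k χ a.ne_zero hg00 d.ne_zero hg11, Xc_units]
  · rw [fB, fB, if_neg hg, if_neg (by rw [h10]; exact mul_ne_zero d.ne_zero hg), mul_zero]

lemma fC_mem (χ : (Fˣ × Fˣ) →* kˣ) : fC F k χ ∈ Ind F k χ := by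
  intro a d c g
  obtain ⟨h00, h01, h10, h11⟩ := b_mul_entries F a d c g
  by_cases hg : (g : M2) 1 0 = 0
  · rw [fC, fC, if_pos hg, if_pos (by rw [h10, hg, mul_zero]), mul_zero]
  · have hdet := det_ne_zero F g
    have key : ((bElt F a d c * g : GL2 F) : M2).det / ((bElt F a d c * g : GL2 F) : M2) 1 0
        = (a : F) * ((g : M2).det / (g : M2) 1 0) := by
      rw [det_b_mul, h10]
      field_simp
    rw [fC, fC, if_neg hg, if_neg (by rw [h10]; exact mul_ne_zero d.ne_zero hg), key, h10,
      Xc_mul F k χ a.ne_zero (div_ne_zero hdet hg) d.ne_zero hg, Xc_units]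

lemma fB_u_inv (χ : (Fˣ × Fˣ) →* kˣ) (c : F) :
    rt F k (uElt F c) (fB F k χ) = fB F k χ := by
  funext x
  show fB F k χ (x * uElt F c) = fB F k χ x
  have e : ∀ i j, ((x * uElt F c : GL2 F) : M2) i j
      = (x : M2) i 0 * (!![1, c; 0, 1] : M2) 0 j + (x : M2) i 1 * (!![1, c; 0, 1]) 1 j := by
    intro i j
    rw [Matrix.GeneralLinearGroup.coe_mul, uElt_val, entry_mul]
  rw [fB, fB]
  have e10 : ((x * uElt F c : GL2 F) : M2) 1 0 = (x : M2) 1 0 := by rw [e]; simp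
  have e00 : ((x * uElt F c : GL2 F) : M2) 0 0 = (x : M2) 0 0 := by rw [e]; simp
  have e11 : ((x * uElt F c : GL2 F) : M2) 1 1 = (x : M2) 1 0 * c + (x : M2) 1 1 := by
    rw [e]; simp
  by_cases hx : (x : M2) 1 0 = 0
  · rw [if_pos (by rw [e10]; exact hx), if_pos hx, e00, e11, hx, zero_mul, zero_add]
  · rw [if_neg (by rw [e10]; exact hx), if_neg hx]

lemma det_mul_u (x : GL2 F) (c : F) :
    ((x * uElt F c : GL2 F) : M2).det = (x : M2).det := by
  rw [Matrix.GeneralLinearGroup.coe_mul, Matrix.det_mul, uElt_val, Matrix.det_fin_two_of]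
  ring

lemma fC_u_inv (χ : (Fˣ × Fˣ) →* kˣ) (c : F) :
    rt F k (uElt F c) (fC F k χ) = fC F k χ := by
  funext x
  show fC F k χ (x * uElt F c) = fC F k χ x
  have e10 : ((x * uElt F c : GL2 F) : M2) 1 0 = (x : M2) 1 0 := by
    rw [Matrix.GeneralLinearGroup.coe_mul, uElt_val, entry_mul]; simp
  rw [fC, fC, e10, det_mul_u]

end Aux2
section Aux3

local notation "M2" => Matrix (Fin 2) (Fin 2) F

lemma bruhat_upper (g : GL2 F) (h : (g : M2) 1 0 = 0) :
    ∃ (a d : Fˣ) (c : F), g = bElt F a d c := by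
  have hd : (g : M2).det = (g : M2) 0 0 * (g : M2) 1 1 := by
    rw [Matrix.det_fin_two, h]; ring
  have h00 : (g : M2) 0 0 ≠ 0 := fun h0 => det_ne_zero F g (by rw [hd, h0, zero_mul])
  have h11 : (g : M2) 1 1 ≠ 0 := fun h0 => det_ne_zero F g (by rw [hd, h0, mul_zero])
  refine ⟨Units.mk0 _ h00, Units.mk0 _ h11, (g : M2) 0 1, ?_⟩
  apply gl2_ext
  rw [bElt_val]
  ext i j
  fin_cases i <;> fin_cases j <;> simp [h]

lemma bnu_val (a d : Fˣ) (c : F) (μ : F) :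
    ((bElt F a d c * nsElt F * uElt F μ : GL2 F) : M2)
      = !![c, c * μ - a; (d : F), d * μ] := by
  rw [Matrix.GeneralLinearGroup.coe_mul, Matrix.GeneralLinearGroup.coe_mul,
    bElt_val, nsElt_val, uElt_val, Matrix.mul_fin_two, Matrix.mul_fin_two]
  ext i j
  fin_cases i <;> fin_cases j <;> simp <;> ring

lemma bruhat_lower (g : GL2 F) (h : (g : M2) 1 0 ≠ 0) :
    ∃ (a d : Fˣ) (c μ : F), g = bElt F a d c * nsElt F * uElt F μ := by
  refine ⟨Units.mk0 ((g : M2).det / (g : M2) 1 0) (div_ne_zero (det_ne_zero F g) h),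
    Units.mk0 _ h, (g : M2) 0 0, (g : M2) 1 1 / (g : M2) 1 0, ?_⟩
  apply gl2_ext
  rw [bnu_val]
  ext i j
  fin_cases i <;> fin_cases j
  · simp
  · simp only [Units.val_mk0]
    rw [Matrix.det_fin_two]
    show (g : M2) 0 1 = _
    field_simp
    try ring
    exact (mul_inv_cancel_right₀ h _).symm
  · simp
  · simp only [Units.val_mk0]
    show (g : M2) 1 1 = _
    field_simp
    rfl

lemma nsu_val (μ : F) : ((nsElt F * uElt F μ : GL2 F) : M2) = !![0, -1; 1, μ] := by
  rw [Matrix.GeneralLinearGroup.coe_mul, nsElt_val, uElt_val, Matrix.mul_fin_two]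
  ext i j
  fin_cases i <;> fin_cases j <;> simp

@[simp] lemma fB_one (ξ : (Fˣ × Fˣ) →* kˣ) : fB F k ξ 1 = 1 := by
  rw [fB]
  rw [if_pos (by rw [Matrix.GeneralLinearGroup.coe_one, Matrix.one_fin_two]; simp)]
  rw [Matrix.GeneralLinearGroup.coe_one, Matrix.one_fin_two]
  simp

@[simp] lemma fC_one (ξ : (Fˣ × Fˣ) →* kˣ) : fC F k ξ 1 = 0 := by
  rw [fC, if_pos (by rw [Matrix.GeneralLinearGroup.coe_one, Matrix.one_fin_two]; simp)]

@[simp] lemma fB_nsu (ξ : (Fˣ × Fˣ) →* kˣ) (μ : F) : fB F k ξ (nsElt F * uElt F μ) = 0 := by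
  rw [fB, if_neg]
  rw [nsu_val]
  simp

@[simp] lemma fC_nsu (ξ : (Fˣ × Fˣ) →* kˣ) (μ : F) : fC F k ξ (nsElt F * uElt F μ) = 1 := by
  rw [fC, if_neg (by rw [nsu_val]; simp)]
  rw [nsu_val]
  have hdet : (!![0, -1; 1, μ] : M2).det = 1 := by rw [Matrix.det_fin_two_of]; ring
  rw [hdet]
  norm_num

@[simp] lemma fB_ns (ξ : (Fˣ × Fˣ) →* kˣ) : fB F k ξ (nsElt F) = 0 := by
  have := fB_nsu F k ξ 0
  rwa [uElt_zero, mul_one] at this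

@[simp] lemma fC_ns (ξ : (Fˣ × Fˣ) →* kˣ) : fC F k ξ (nsElt F) = 1 := by
  have := fC_nsu F k ξ 0
  rwa [uElt_zero, mul_one] at this

@[simp] lemma fB_lElt (ξ : (Fˣ × Fˣ) →* kˣ) (ν : F) :
    fB F k ξ (lElt F ν) = if ν = 0 then 1 else 0 := by
  by_cases hν : ν = 0
  · rw [if_pos hν, hν, lElt_zero, fB_one]
  · rw [if_neg hν, fB, if_neg (by rw [lElt_val]; simpa using hν)]

lemma ind_stable (ξ : (Fˣ × Fˣ) →* kˣ) (g : GL2 F) {f : GL2 F → k} (hf : f ∈ Ind F k ξ) :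
    rt F k g f ∈ Ind F k ξ := by
  intro a d c y
  show f (bElt F a d c * y * g) = _ * f (y * g)
  rw [mul_assoc]
  exact hf a d c (y * g)

lemma ind_val_b (ξ : (Fˣ × Fˣ) →* kˣ) {f : GL2 F → k} (hf : f ∈ Ind F k ξ)
    (a d : Fˣ) (c : F) : f (bElt F a d c) = (ξ (a, d) : k) * f 1 := by
  have := hf a d c 1
  rwa [mul_one] at this

lemma fB_b (ξ : (Fˣ × Fˣ) →* kˣ) (a d : Fˣ) (c : F) :
    fB F k ξ (bElt F a d c) = (ξ (a, d) : k) := by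
  rw [ind_val_b F k ξ (fB_mem F k ξ) a d c, fB_one, mul_one]

lemma fC_b (ξ : (Fˣ × Fˣ) →* kˣ) (a d : Fˣ) (c : F) :
    fC F k ξ (bElt F a d c) = 0 := by
  rw [ind_val_b F k ξ (fC_mem F k ξ) a d c, fC_one, mul_zero]

lemma nsu_mul_inv_nsu (l m : F) :
    (nsElt F * uElt F l) * (nsElt F * uElt F m)⁻¹ = lElt F (m - l) := by
  rw [ns_mul_u, ns_mul_u, _root_.mul_inv_rev, lElt_inv, neg_neg, mul_assoc, ← mul_assoc (nsElt F),
    mul_inv_cancel, one_mul, lElt_mul]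
  congr 1
  ring

lemma ind_decomp (ξ : (Fˣ × Fˣ) →* kˣ) (f : GL2 F → k) (hf : f ∈ Ind F k ξ) :
    f = f 1 • fB F k ξ +
      ∑ μ : F, f (nsElt F * uElt F μ) • rt F k ((nsElt F * uElt F μ)⁻¹) (fB F k ξ) := by
  funext x
  simp only [Pi.add_apply, Pi.smul_apply, Finset.sum_apply, smul_eq_mul]
  have hterm : ∀ μ : F, (rt F k ((nsElt F * uElt F μ)⁻¹) (fB F k ξ)) x
      = fB F k ξ (x * (nsElt F * uElt F μ)⁻¹) := fun μ => rfl
  by_cases hx : (x : M2) 1 0 = 0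
  · obtain ⟨a, d, c, hxe⟩ := bruhat_upper F x hx
    have hzero : ∀ μ : F, fB F k ξ (x * (nsElt F * uElt F μ)⁻¹) = 0 := by
      intro μ
      by_contra hne
      have hy : ((x * (nsElt F * uElt F μ)⁻¹ : GL2 F) : M2) 1 0 = 0 := by
        by_contra hyy
        rw [fB, if_neg hyy] at hne
        exact hne rfl
      obtain ⟨a', d', c', hy'⟩ := bruhat_upper F _ hy
      have : x = bElt F a' d' c' * (nsElt F * uElt F μ) := by
        rw [← hy', inv_mul_cancel_right]
      have h10 : (x : M2) 1 0 = (d' : F) := by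
        rw [this, ← mul_assoc, bnu_val]
        simp
      rw [hx] at h10
      exact d'.ne_zero h10.symm
    simp only [hterm, hzero, mul_zero, Finset.sum_const_zero, add_zero]
    rw [hxe, ind_val_b F k ξ hf, fB_b]
    ring
  · obtain ⟨a, d, c, l, hxe⟩ := bruhat_lower F x hx
    have hfx : f x = (ξ (a, d) : k) * f (nsElt F * uElt F l) := by
      rw [hxe, mul_assoc]
      exact hf a d c _
    have hfBx : fB F k ξ x = 0 := by
      rw [fB, if_neg]
      rw [hxe, bnu_val]
      simp
    have hterm2 : ∀ μ : F, fB F k ξ (x * (nsElt F * uElt F μ)⁻¹)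
        = (ξ (a, d) : k) * (if μ = l then 1 else 0) := by
      intro μ
      rw [hxe, mul_assoc (bElt F a d c), mul_assoc (bElt F a d c), nsu_mul_inv_nsu, fB_mem F k ξ a d c, fB_lElt]
      simp [sub_eq_zero]
    simp only [hterm, hterm2]
    rw [hfx, hfBx, mul_zero, zero_add]
    have : ∀ μ : F, f (nsElt F * uElt F μ) * ((ξ (a, d) : k) * (if μ = l then 1 else 0))
        = if μ = l then f (nsElt F * uElt F μ) * (ξ (a, d) : k) else 0 := by
      intro μ
      by_cases h : μ = l <;> simp [h]
    simp only [this]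
    rw [Finset.sum_ite_eq' Finset.univ l (fun μ => f (nsElt F * uElt F μ) * (ξ (a, d) : k))]
    rw [if_pos (Finset.mem_univ l)]
    ring

lemma ind_eq_span (ξ : (Fˣ × Fˣ) →* kˣ) :
    Ind F k ξ = Submodule.span k (Set.range fun g => rt F k g (fB F k ξ)) := by
  apply le_antisymm
  · intro f hf
    rw [ind_decomp F k ξ f hf]
    refine Submodule.add_mem _ (Submodule.smul_mem _ _ ?_)
      (Submodule.sum_mem _ fun μ _ => Submodule.smul_mem _ _ ?_)
    · exact Submodule.subset_span ⟨1, by simp⟩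
    · exact Submodule.subset_span ⟨_, rfl⟩
  · rw [Submodule.span_le]
    rintro _ ⟨g, rfl⟩
    exact ind_stable F k ξ g (fB_mem F k ξ)

lemma u_inv_decomp (ξ : (Fˣ × Fˣ) →* kˣ) (f : GL2 F → k) (hf : f ∈ Ind F k ξ)
    (hinv : ∀ c : F, rt F k (uElt F c) f = f) :
    f = f 1 • fB F k ξ + f (nsElt F) • fC F k ξ := by
  funext x
  simp only [Pi.add_apply, Pi.smul_apply, smul_eq_mul]
  by_cases hx : (x : M2) 1 0 = 0
  · obtain ⟨a, d, c, hxe⟩ := bruhat_upper F x hx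
    rw [hxe, ind_val_b F k ξ hf, fB_b, fC_b, mul_zero, add_zero]
    ring
  · obtain ⟨a, d, c, l, hxe⟩ := bruhat_lower F x hx
    have hns : f (nsElt F * uElt F l) = f (nsElt F) := by
      have := congrFun (hinv l) (nsElt F)
      exact this
    rw [hxe, mul_assoc, hf a d c _, fB_mem F k ξ a d c _, fC_mem F k ξ a d c _,
      fB_nsu, fC_nsu, hns]
    ring

end Aux3
section Aux4

local notation "M2" => Matrix (Fin 2) (Fin 2) F

lemma ns_inv_val : (((nsElt F)⁻¹ : GL2 F) : M2) = !![0, 1; -1, 0] := by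
  have h : (nsElt F)⁻¹ = Matrix.GeneralLinearGroup.mkOfDetNeZero (!![0, 1; -1, 0] : M2)
      (by norm_num [Matrix.det_fin_two_of]) := by
    apply inv_eq_of_mul_eq_one_right
    apply gl2_ext
    rw [Matrix.GeneralLinearGroup.coe_mul, nsElt_val, Matrix.GeneralLinearGroup.coe_one]
    show !![0, -1; 1, 0] * !![0, 1; -1, 0] = (1 : M2)
    rw [Matrix.mul_fin_two, Matrix.one_fin_two]
    norm_num
  rw [h]
  rfl

lemma hecke_arg_val (l : F) (x : GL2 F) :
    (((nsElt F)⁻¹ * uElt F l * x : GL2 F) : M2)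
      = !![(x : M2) 1 0, (x : M2) 1 1;
           -(x : M2) 0 0 - l * (x : M2) 1 0, -(x : M2) 0 1 - l * (x : M2) 1 1] := by
  rw [Matrix.GeneralLinearGroup.coe_mul, Matrix.GeneralLinearGroup.coe_mul,
    ns_inv_val, uElt_val, Matrix.mul_fin_two]
  ext i j
  fin_cases i <;> fin_cases j <;> (rw [entry_mul]; simp) <;> ring

lemma hecke_arg_det (l : F) (x : GL2 F) :
    (((nsElt F)⁻¹ * uElt F l * x : GL2 F) : M2).det = (x : M2).det := by
  rw [Matrix.GeneralLinearGroup.coe_mul, Matrix.det_mul,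
    Matrix.GeneralLinearGroup.coe_mul, Matrix.det_mul, ns_inv_val, uElt_val,
    Matrix.det_fin_two_of, Matrix.det_fin_two_of]
  ring

lemma hecke_fB (χ : (Fˣ × Fˣ) →* kˣ) :
    heckeT F k (fB F k χ) = fC F k (swapChar F k χ) := by
  funext x
  show ∑ l : F, fB F k χ ((nsElt F)⁻¹ * uElt F l * x) = fC F k (swapChar F k χ) x
  by_cases hx : (x : M2) 1 0 = 0
  · have hx00 : (x : M2) 0 0 ≠ 0 := by
      intro h0
      apply det_ne_zero F x
      rw [Matrix.det_fin_two, h0, hx]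
      ring
    have hterm : ∀ l : F, fB F k χ ((nsElt F)⁻¹ * uElt F l * x) = 0 := by
      intro l
      rw [fB, if_neg]
      rw [hecke_arg_val]
      simpa [hx] using hx00
    rw [fC, if_pos hx]
    simp [hterm]
  · set l0 : F := -(x : M2) 0 0 / (x : M2) 1 0 with hl0
    have hterm : ∀ l : F, fB F k χ ((nsElt F)⁻¹ * uElt F l * x)
        = if l = l0 then Xc F k χ ((x : M2) 1 0) ((x : M2).det / (x : M2) 1 0) else 0 := by
      intro l
      by_cases hl : l = l0
      · rw [if_pos hl, fB, hecke_arg_val]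
        have hcond : -(x : M2) 0 0 - l * (x : M2) 1 0 = 0 := by
          rw [hl, hl0]
          field_simp
          ring
        rw [if_pos (by simpa using hcond)]
        have hval : -(x : M2) 0 1 - l * (x : M2) 1 1 = (x : M2).det / (x : M2) 1 0 := by
          rw [hl, hl0, Matrix.det_fin_two]
          field_simp
          ring
        simp [hval]
      · rw [if_neg hl, fB, if_neg]
        rw [hecke_arg_val]
        have hcond : -(x : M2) 0 0 - l * (x : M2) 1 0 ≠ 0 := by
          intro h0
          apply hl
          rw [hl0, eq_div_iff hx]
          linear_combination -h0
        simpa using hcond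
    rw [fC, if_neg hx, Xc_swap]
    simp only [hterm]
    rw [Finset.sum_ite_eq' Finset.univ l0
      (fun _ => Xc F k χ ((x : M2) 1 0) ((x : M2).det / (x : M2) 1 0))]
    rw [if_pos (Finset.mem_univ l0)]

lemma hecke_equivariant (g : GL2 F) (f : GL2 F → k) :
    heckeT F k (rt F k g f) = rt F k g (heckeT F k f) := by
  funext x
  show ∑ l : F, f ((nsElt F)⁻¹ * uElt F l * x * g) = ∑ l : F, f ((nsElt F)⁻¹ * uElt F l * (x * g))
  simp only [mul_assoc]

lemma im_hecke (χ : (Fˣ × Fˣ) →* kˣ) :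
    Submodule.map (heckeT F k) (Ind F k χ)
      = Submodule.span k (Set.range fun g => rt F k g (fC F k (swapChar F k χ))) := by
  rw [ind_eq_span F k χ, Submodule.map_span, ← Set.range_comp]
  have hcomp : (⇑(heckeT F k) ∘ fun g => rt F k g (fB F k χ))
      = fun g => rt F k g (fC F k (swapChar F k χ)) := by
    funext g
    show heckeT F k (rt F k g (fB F k χ)) = rt F k g (fC F k (swapChar F k χ))
    rw [hecke_equivariant, hecke_fB]
  rw [hcomp]

end Aux4
section Aux5

lemma charP_of_card (p n : ℕ) [Fact p.Prime] (hn : 1 ≤ n) (hF : Fintype.card F = p ^ n) :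
    CharP F p := by
  have h0 : ((p : ℕ) : F) ^ n = 0 := by
    have := FiniteField.cast_card_eq_zero F
    rw [hF] at this
    push_cast at this
    exact this
  have hp0 : ((p : ℕ) : F) = 0 := pow_eq_zero_iff (by omega) |>.mp h0
  exact (CharP.charP_iff_prime_eq_zero Fact.out).mpr hp0

lemma algebraMap_end_injective :
    Function.Injective (algebraMap k (Module.End k (GL2 F → k))) := by
  intro a b h
  have h1 := congrFun (congrArg (fun (T : Module.End k (GL2 F → k)) =>
    (T (fun _ => (1 : k)))) h) 1
  simpa [Module.algebraMap_end_apply] using h1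

lemma charP_end (p : ℕ) [CharP k p] : CharP (Module.End k (GL2 F → k)) p :=
  charP_of_injective_ringHom (algebraMap_end_injective F k) p

lemma rt_u_pow (p : ℕ) [CharP F p] (c : F) :
    (rt F k (uElt F c) : Module.End k (GL2 F → k)) ^ p = 1 := by
  rw [← map_pow, uElt_pow]
  have : (p • c : F) = 0 := by
    rw [nsmul_eq_mul, CharP.cast_eq_zero F p, zero_mul]
  rw [this, uElt_zero, _root_.map_one]

lemma fix_step (p : ℕ) [Fact p.Prime] [CharP F p] [CharP k p]
    (N : Submodule k (GL2 F → k)) (hstab : ∀ g : GL2 F, ∀ f ∈ N, rt F k g f ∈ N)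
    (f : GL2 F → k) (hfN : f ∈ N) (hf : f ≠ 0) (ν : F) :
    ∃ f', f' ∈ N ∧ f' ≠ 0 ∧ rt F k (uElt F ν) f' = f' ∧
      ∀ μ : F, rt F k (uElt F μ) f = f → rt F k (uElt F μ) f' = f' := by
  haveI := charP_end F k p
  set A : Module.End k (GL2 F → k) := rt F k (uElt F ν) with hA
  set D : Module.End k (GL2 F → k) := A - 1 with hD
  have hDp : D ^ p = 0 := by
    rw [hD, sub_pow_char_of_commute (x := A) (y := 1) (p := p) (Commute.one_right A), one_pow, hA,
      rt_u_pow F k p ν, sub_self]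
  have hDN : ∀ (j : ℕ) (v : GL2 F → k), v ∈ N → (D ^ j) v ∈ N := by
    intro j
    induction j with
    | zero => intro v hv; simpa using hv
    | succ j ih =>
      intro v hv
      rw [pow_succ, Module.End.mul_apply]
      have hDv : D v ∈ N := by
        rw [hD, LinearMap.sub_apply, Module.End.one_apply]
        exact Submodule.sub_mem N (hstab _ v hv) hv
      exact ih _ hDv
  have hex : ∃ m : ℕ, (D ^ m) f = 0 := ⟨p, by rw [hDp]; rfl⟩
  have hm : (D ^ Nat.find hex) f = 0 := Nat.find_spec hex
  have hmpos : 0 < Nat.find hex := by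
    rcases Nat.eq_zero_or_pos (Nat.find hex) with h0 | h0
    · exfalso
      rw [h0, pow_zero] at hm
      exact hf (by simpa using hm)
    · exact h0
  set f' : GL2 F → k := (D ^ (Nat.find hex - 1)) f with hf'
  have hf'N : f' ∈ N := hDN _ f hfN
  have hf'ne : f' ≠ 0 := Nat.find_min hex (Nat.sub_lt hmpos one_pos)
  have hDf' : D f' = 0 := by
    rw [hf', ← Module.End.mul_apply, ← pow_succ', Nat.sub_add_cancel hmpos]
    exact hm
  have hfix : rt F k (uElt F ν) f' = f' := by
    have h2 : A f' - f' = 0 := by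
      have := hDf'
      rwa [hD, LinearMap.sub_apply, Module.End.one_apply] at this
    have := sub_eq_zero.mp h2
    rwa [hA] at this
  refine ⟨f', hf'N, hf'ne, hfix, ?_⟩
  intro μ hμ
  have h1 : (rt F k (uElt F μ) : Module.End k (GL2 F → k)) * A
      = A * rt F k (uElt F μ) := by
    rw [hA, ← _root_.map_mul, ← _root_.map_mul, uElt_mul, uElt_mul, add_comm]
  have h1' : Commute (rt F k (uElt F μ) : Module.End k (GL2 F → k)) A := h1
  have hcomm : Commute (rt F k (uElt F μ) : Module.End k (GL2 F → k)) D := by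
    rw [hD]
    exact h1'.sub_right (Commute.one_right _)
  show rt F k (uElt F μ) ((D ^ (Nat.find hex - 1)) f) = (D ^ (Nat.find hex - 1)) f
  rw [← Module.End.mul_apply, (hcomm.pow_right (Nat.find hex - 1)).eq,
    Module.End.mul_apply, hμ]

lemma exists_u_fixed (p : ℕ) [Fact p.Prime] [CharP F p] [CharP k p]
    (N : Submodule k (GL2 F → k)) (hstab : ∀ g : GL2 F, ∀ f ∈ N, rt F k g f ∈ N)
    (f0 : GL2 F → k) (hf0N : f0 ∈ N) (hf0 : f0 ≠ 0) :
    ∃ f', f' ∈ N ∧ f' ≠ 0 ∧ ∀ μ : F, rt F k (uElt F μ) f' = f' := by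
  suffices h : ∀ s : Finset F, ∃ f', f' ∈ N ∧ f' ≠ 0 ∧ ∀ μ ∈ s, rt F k (uElt F μ) f' = f' by
    obtain ⟨f', h1, h2, h3⟩ := h Finset.univ
    exact ⟨f', h1, h2, fun μ => h3 μ (Finset.mem_univ μ)⟩
  intro s
  induction s using Finset.induction_on with
  | empty => exact ⟨f0, hf0N, hf0, by simp⟩
  | @insert ν s hνs ih =>
    obtain ⟨f', h1, h2, h3⟩ := ih
    obtain ⟨f'', g1, g2, g3, g4⟩ := fix_step F k p N hstab f' h1 h2 ν
    refine ⟨f'', g1, g2, ?_⟩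
    intro μ hμ
    rcases Finset.mem_insert.mp hμ with h | h
    · rw [h]; exact g3
    · exact g4 μ (h3 μ h)

end Aux5
section Aux6

local notation "M2" => Matrix (Fin 2) (Fin 2) F

lemma mul_b0_val (x : GL2 F) (a d : Fˣ) :
    ((x * bElt F a d 0 : GL2 F) : M2)
      = !![(x : M2) 0 0 * a, (x : M2) 0 1 * d; (x : M2) 1 0 * a, (x : M2) 1 1 * d] := by
  rw [Matrix.GeneralLinearGroup.coe_mul, bElt_val]
  ext i j
  fin_cases i <;> fin_cases j <;> (rw [entry_mul]; simp)

lemma det_mul_b0 (x : GL2 F) (a d : Fˣ) :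
    ((x * bElt F a d 0 : GL2 F) : M2).det = (x : M2).det * (a * d) := by
  rw [Matrix.GeneralLinearGroup.coe_mul, Matrix.det_mul, bElt_val, Matrix.det_fin_two_of]
  ring

lemma rt_b0_fB (ξ : (Fˣ × Fˣ) →* kˣ) (a d : Fˣ) :
    rt F k (bElt F a d 0) (fB F k ξ) = (ξ (a, d) : k) • fB F k ξ := by
  funext x
  show fB F k ξ (x * bElt F a d 0) = _
  simp only [Pi.smul_apply, smul_eq_mul]
  have h00 : ((x * bElt F a d 0 : GL2 F) : M2) 0 0 = (x : M2) 0 0 * a := by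
    rw [mul_b0_val]; simp
  have h10 : ((x * bElt F a d 0 : GL2 F) : M2) 1 0 = (x : M2) 1 0 * a := by
    rw [mul_b0_val]; simp
  have h11 : ((x * bElt F a d 0 : GL2 F) : M2) 1 1 = (x : M2) 1 1 * d := by
    rw [mul_b0_val]; simp
  by_cases hx : (x : M2) 1 0 = 0
  · have hdetx : (x : M2).det = (x : M2) 0 0 * (x : M2) 1 1 := by
      rw [Matrix.det_fin_two, hx]; ring
    have hx00 : (x : M2) 0 0 ≠ 0 := fun h0 => det_ne_zero F x (by rw [hdetx, h0, zero_mul])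
    have hx11 : (x : M2) 1 1 ≠ 0 := fun h0 => det_ne_zero F x (by rw [hdetx, h0, mul_zero])
    rw [fB, fB, if_pos (by rw [h10, hx, zero_mul]), if_pos hx, h00, h11,
      Xc_mul F k ξ hx00 a.ne_zero hx11 d.ne_zero, Xc_units]
    ring
  · rw [fB, fB, if_neg (by rw [h10]; exact mul_ne_zero hx a.ne_zero), if_neg hx, mul_zero]

lemma rt_b0_fC (ξ : (Fˣ × Fˣ) →* kˣ) (a d : Fˣ) :
    rt F k (bElt F a d 0) (fC F k ξ) = (ξ (d, a) : k) • fC F k ξ := by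
  funext x
  show fC F k ξ (x * bElt F a d 0) = _
  simp only [Pi.smul_apply, smul_eq_mul]
  have h10 : ((x * bElt F a d 0 : GL2 F) : M2) 1 0 = (x : M2) 1 0 * a := by
    rw [mul_b0_val]; simp
  by_cases hx : (x : M2) 1 0 = 0
  · rw [fC, fC, if_pos (by rw [h10, hx, zero_mul]), if_pos hx, mul_zero]
  · have hkey : ((x * bElt F a d 0 : GL2 F) : M2).det
        / ((x * bElt F a d 0 : GL2 F) : M2) 1 0
        = ((x : M2).det / (x : M2) 1 0) * d := by
      rw [det_mul_b0, h10]
      field_simp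
    rw [fC, fC, if_neg (by rw [h10]; exact mul_ne_zero hx a.ne_zero), if_neg hx, hkey, h10,
      Xc_mul F k ξ (div_ne_zero (det_ne_zero F x) hx) d.ne_zero hx a.ne_zero, Xc_units]
    ring

lemma key_min (p n : ℕ) [Fact p.Prime] [CharP k p] (hn : 1 ≤ n)
    (hF : Fintype.card F = p ^ n) (χ : (Fˣ × Fˣ) →* kˣ) (hχ : χ ≠ swapChar F k χ)
    (N : Submodule k (GL2 F → k)) (hNle : N ≤ Ind F k (swapChar F k χ))
    (hNstab : ∀ (g : GL2 F), ∀ f ∈ N, rt F k g f ∈ N) (hNbot : N ≠ ⊥) :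
    Submodule.map (heckeT F k) (Ind F k χ) ≤ N := by
  haveI := charP_of_card F p n hn hF
  obtain ⟨f0, hf0N, hf0⟩ := Submodule.exists_mem_ne_zero_of_ne_bot hNbot
  obtain ⟨g, hgN, hgne, hgfix⟩ := exists_u_fixed F k p N hNstab f0 hf0N hf0
  have hdec := u_inv_decomp F k (swapChar F k χ) g (hNle hgN) hgfix
  set c1 : k := g 1 with hc1e
  set c2 : k := g (nsElt F) with hc2e
  obtain ⟨x0, hx0⟩ : ∃ x : Fˣ × Fˣ, χ x ≠ swapChar F k χ x := by
    by_contra hc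
    push_neg at hc
    exact hχ (DFunLike.ext _ _ hc)
  obtain ⟨a0, d0⟩ := x0
  have hδ : (χ (a0, d0) : k) - (χ (d0, a0) : k) ≠ 0 :=
    sub_ne_zero.mpr (fun hh => hx0 (Units.ext hh))
  have e1 : rt F k (bElt F a0 d0 0) (fB F k (swapChar F k χ))
      = (χ (d0, a0) : k) • fB F k (swapChar F k χ) := rt_b0_fB F k (swapChar F k χ) a0 d0
  have e2 : rt F k (bElt F a0 d0 0) (fC F k (swapChar F k χ))
      = (χ (a0, d0) : k) • fC F k (swapChar F k χ) := rt_b0_fC F k (swapChar F k χ) a0 d0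
  have hrtg : rt F k (bElt F a0 d0 0) g
      = c1 • ((χ (d0, a0) : k) • fB F k (swapChar F k χ))
        + c2 • ((χ (a0, d0) : k) • fC F k (swapChar F k χ)) := by
    conv_lhs => rw [hdec]
    rw [map_add, LinearMap.map_smul, LinearMap.map_smul, e1, e2]
  have himle : fC F k (swapChar F k χ) ∈ N →
      Submodule.map (heckeT F k) (Ind F k χ) ≤ N := by
    intro hfC
    rw [im_hecke F k χ, Submodule.span_le]
    rintro _ ⟨g', rfl⟩
    exact hNstab g' _ hfC
  by_cases hc2 : c2 = 0
  · have hc1 : c1 ≠ 0 := by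
      intro hc1
      apply hgne
      rw [hdec, hc1, hc2, zero_smul, zero_smul, add_zero]
    have hv1 : (c1 * ((χ (a0, d0) : k) - (χ (d0, a0) : k))) • fB F k (swapChar F k χ) ∈ N := by
      have hmem : (χ (a0, d0) : k) • g - rt F k (bElt F a0 d0 0) g ∈ N :=
        Submodule.sub_mem N (Submodule.smul_mem N _ hgN) (hNstab _ _ hgN)
      have heq : (χ (a0, d0) : k) • g - rt F k (bElt F a0 d0 0) g
          = (c1 * ((χ (a0, d0) : k) - (χ (d0, a0) : k))) • fB F k (swapChar F k χ) := by
        rw [hrtg]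
        conv_lhs => rw [hdec]
        module
      rw [← heq]
      exact hmem
    have hne : c1 * ((χ (a0, d0) : k) - (χ (d0, a0) : k)) ≠ 0 := mul_ne_zero hc1 hδ
    have hfB : fB F k (swapChar F k χ) ∈ N := by
      have h2 := Submodule.smul_mem N (c1 * ((χ (a0, d0) : k) - (χ (d0, a0) : k)))⁻¹ hv1
      rwa [smul_smul, inv_mul_cancel₀ hne, one_smul] at h2
    have hind : Ind F k (swapChar F k χ) ≤ N := by
      rw [ind_eq_span F k (swapChar F k χ), Submodule.span_le]
      rintro _ ⟨g', rfl⟩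
      exact hNstab g' _ hfB
    exact himle (hind (fC_mem F k (swapChar F k χ)))
  · have hv2 : (c2 * ((χ (a0, d0) : k) - (χ (d0, a0) : k)))
        • fC F k (swapChar F k χ) ∈ N := by
      have hmem : rt F k (bElt F a0 d0 0) g - (χ (d0, a0) : k) • g ∈ N :=
        Submodule.sub_mem N (hNstab _ _ hgN) (Submodule.smul_mem N _ hgN)
      have heq : rt F k (bElt F a0 d0 0) g - (χ (d0, a0) : k) • g
          = (c2 * ((χ (a0, d0) : k) - (χ (d0, a0) : k)))
            • fC F k (swapChar F k χ) := by
        rw [hrtg]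
        conv_lhs => rw [hdec]
        module
      rw [← heq]
      exact hmem
    have hne : c2 * ((χ (a0, d0) : k) - (χ (d0, a0) : k)) ≠ 0 := mul_ne_zero hc2 hδ
    have hfC : fC F k (swapChar F k χ) ∈ N := by
      have h2 := Submodule.smul_mem N (c2 * ((χ (a0, d0) : k) - (χ (d0, a0) : k)))⁻¹ hv2
      rwa [smul_smul, inv_mul_cancel₀ hne, one_smul] at h2
    exact himle hfC

end Aux6
section Aux7

lemma im_ne_bot (χ : (Fˣ × Fˣ) →* kˣ) :
    Submodule.map (heckeT F k) (Ind F k χ) ≠ ⊥ := by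
  intro hbot
  have hmem : fC F k (swapChar F k χ) ∈ Submodule.map (heckeT F k) (Ind F k χ) := by
    rw [im_hecke F k χ]
    exact Submodule.subset_span ⟨1, by simp only [_root_.map_one]; rfl⟩
  rw [hbot, Submodule.mem_bot] at hmem
  apply one_ne_zero (α := k)
  rw [← fC_ns F k (swapChar F k χ), hmem]
  simp

lemma uinv_mem_iff (f : GL2 F → k) :
    f ∈ invSubmodule k (rt F k) (Set.range (uElt F)) ↔
      ∀ c : F, rt F k (uElt F c) f = f := by
  constructor
  · intro hf c
    exact hf (uElt F c) ⟨c, rfl⟩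
  · intro hf g hg
    obtain ⟨c, rfl⟩ := hg
    exact hf c

end Aux7

/-- for `χ ≠ χ^s`, the `U`-invariants of `Ind_B^Γ χ^s` are two-dimensional,
every nonzero `k[Γ]`-submodule of `Ind_B^Γ χ^s` contains `Im T_{n_s}`; in particular
`Ind_B^Γ χ^s` is indecomposable and `Im T_{n_s}` is its unique minimal nonzero submodule. -/
theorem stmt_7 (p n : ℕ) [Fact p.Prime] (hn : 1 ≤ n) (hF : Fintype.card F = p ^ n)
    [IsAlgClosed k] [CharP k p]
    (χ : (Fˣ × Fˣ) →* kˣ) (hχ : χ ≠ swapChar F k χ) :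
    Module.finrank k
      ↥(Ind F k (swapChar F k χ) ⊓ invSubmodule k (rt F k) (Set.range (uElt F))) = 2 ∧
    (∀ N : Submodule k (GL2 F → k), N ≤ Ind F k (swapChar F k χ) →
      (∀ (g : GL2 F), ∀ f ∈ N, rt F k g f ∈ N) → N ≠ ⊥ →
      Submodule.map (heckeT F k) (Ind F k χ) ≤ N) ∧
    Submodule.map (heckeT F k) (Ind F k χ) ≠ ⊥ ∧
    (∀ N₁ N₂ : Submodule k (GL2 F → k),
      N₁ ≤ Ind F k (swapChar F k χ) → N₂ ≤ Ind F k (swapChar F k χ) →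
      (∀ (g : GL2 F), ∀ f ∈ N₁, rt F k g f ∈ N₁) →
      (∀ (g : GL2 F), ∀ f ∈ N₂, rt F k g f ∈ N₂) →
      N₁ ⊓ N₂ = ⊥ → N₁ ⊔ N₂ = Ind F k (swapChar F k χ) →
      N₁ = ⊥ ∨ N₂ = ⊥) := by
  refine ⟨?_, ?_, ?_, ?_⟩
  · -- finrank of U-invariants is 2
    have hLI : LinearIndependent k ![fB F k (swapChar F k χ), fC F k (swapChar F k χ)] := by
      rw [LinearIndependent.pair_iff]
      intro s t hst
      constructor
      · have h1 := congrFun hst 1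
        simpa using h1
      · have h2 := congrFun hst (nsElt F)
        simpa using h2
    have hspan : Ind F k (swapChar F k χ) ⊓ invSubmodule k (rt F k) (Set.range (uElt F))
        = Submodule.span k (Set.range ![fB F k (swapChar F k χ), fC F k (swapChar F k χ)]) := by
      apply le_antisymm
      · intro f hf
        obtain ⟨hfI, hfU⟩ := Submodule.mem_inf.mp hf
        rw [u_inv_decomp F k (swapChar F k χ) f hfI ((uinv_mem_iff F k f).mp hfU)]
        refine Submodule.add_mem _ (Submodule.smul_mem _ _ (Submodule.subset_span ⟨0, rfl⟩))
          (Submodule.smul_mem _ _ (Submodule.subset_span ⟨1, rfl⟩))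
      · rw [Submodule.span_le]
        rintro _ ⟨i, rfl⟩
        fin_cases i
        · exact Submodule.mem_inf.mpr ⟨fB_mem F k _,
            (uinv_mem_iff F k _).mpr (fun c => fB_u_inv F k _ c)⟩
        · exact Submodule.mem_inf.mpr ⟨fC_mem F k _,
            (uinv_mem_iff F k _).mpr (fun c => fC_u_inv F k _ c)⟩
    rw [hspan, finrank_span_eq_card hLI]
    simp
  · intro N hle hstab hbot
    exact key_min F k p n hn hF χ hχ N hle hstab hbot
  · exact im_ne_bot F k χ
  · intro N1 N2 hle1 hle2 hstab1 hstab2 hinf hsup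
    by_contra hcon
    push_neg at hcon
    obtain ⟨hb1, hb2⟩ := hcon
    have h1 := key_min F k p n hn hF χ hχ N1 hle1 hstab1 hb1
    have h2 := key_min F k p n hn hF χ hχ N2 hle2 hstab2 hb2
    have h3 : Submodule.map (heckeT F k) (Ind F k χ) ≤ ⊥ := hinf ▸ le_inf h1 h2
    exact im_ne_bot F k χ (le_bot_iff.mp h3)

end
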